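/- arXiv:2604.23607 — 3 statements merged into one kernel-verified Lean document; each statement's English description precedes it below -/
import Mathlib

section
/- Let d ≥ 2 and let W be a σ_d-invariant web, i.e., a family of chords such that: (a) every non-critical chord of W belongs to a full sibling collection contained in W, (b) W contains all points of the circle as degenerate chords, (c) W is closed under taking σ_d-images, and (d) every chord of W has a σ_d-preimage in W. Then the closure of W (in the Hausdorff metric on chords) is again a σ_d-invariant web. -/
noncomputable section

/-- The circle `ℝ/ℤ`. -/
abbrev S1 := AddCircle (1 : ℝ)

/-- The `d`-tupling map `σ_d(t) = d·t` on the circle. -/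
def sig (d : ℕ) (x : S1) : S1 := d • x

/-- `StrictArc a b c` : `b` lies strictly inside the positively oriented open arc from `a` to `c`. -/
def StrictArc (a b c : S1) : Prop :=
  ∃ x y z : ℝ, (x : S1) = a ∧ (y : S1) = b ∧ (z : S1) = c ∧ x < y ∧ y < z ∧ z < x + 1

/-- Two chords (given by ordered pairs of endpoints) are linked (cross): their endpoints
alternate on the circle. -/
def Linked (p q : S1 × S1) : Prop :=
  (StrictArc p.1 q.1 p.2 ∧ StrictArc p.2 q.2 p.1) ∨ (StrictArc p.1 q.2 p.2 ∧ StrictArc p.2 q.1 p.1)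

lemma sig_cont (d : ℕ) : Continuous (sig d) := continuous_nsmul d

lemma S1_coe_surj : Function.Surjective (fun x : ℝ => (x : S1)) :=
  QuotientAddGroup.mk_surjective

lemma coe_int_S1 (n : ℤ) : ((n : ℝ) : S1) = 0 := by
  rw [AddCircle.coe_eq_zero_iff]; exact ⟨n, by simp⟩

lemma exists_lift (x : ℝ) (u : S1) :
    ∃ x' : ℝ, (x' : S1) = u ∧ |x - x'| = dist ((x : S1)) u := by
  obtain ⟨y, rfl⟩ := S1_coe_surj u
  refine ⟨y + round (x - y), ?_, ?_⟩
  · push_cast [AddCircle.coe_add]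
    rw [coe_int_S1]; simp
  · rw [dist_eq_norm, ← AddCircle.coe_sub, AddCircle.norm_eq]
    simp [abs_sub_comm]
    ring_nf

lemma strictArc_isOpen : IsOpen {t : S1 × S1 × S1 | StrictArc t.1 t.2.1 t.2.2} := by
  rw [Metric.isOpen_iff]
  rintro ⟨a, b, c⟩ ⟨x, y, z, hx, hy, hz, h1, h2, h3⟩
  refine ⟨min (min ((y - x)/2) ((z - y)/2)) ((x + 1 - z)/2),
    lt_min (lt_min (by linarith) (by linarith)) (by linarith), ?_⟩
  set ε := min (min ((y - x)/2) ((z - y)/2)) ((x + 1 - z)/2) with hε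
  have he1 : ε ≤ (y - x)/2 := (min_le_left _ _).trans (min_le_left _ _)
  have he2 : ε ≤ (z - y)/2 := (min_le_left _ _).trans (min_le_right _ _)
  have he3 : ε ≤ (x + 1 - z)/2 := min_le_right _ _
  rintro ⟨a', b', c'⟩ hmem
  rw [Metric.mem_ball, Prod.dist_eq, Prod.dist_eq] at hmem
  simp only [max_lt_iff] at hmem
  obtain ⟨hda, hdb, hdc⟩ := hmem
  obtain ⟨x', hx', hxd⟩ := exists_lift x a'
  obtain ⟨y', hy', hyd⟩ := exists_lift y b'
  obtain ⟨z', hz', hzd⟩ := exists_lift z c'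
  have hax : |x - x'| < ε := by rw [hxd, hx, dist_comm]; exact hda
  have hby : |y - y'| < ε := by rw [hyd, hy, dist_comm]; exact hdb
  have hcz : |z - z'| < ε := by rw [hzd, hz, dist_comm]; exact hdc
  rw [abs_lt] at hax hby hcz
  exact ⟨x', y', z', hx', hy', hz', by linarith, by linarith, by linarith⟩

lemma linked_isOpen : IsOpen {pq : (S1 × S1) × (S1 × S1) | Linked pq.1 pq.2} := by
  have hT := strictArc_isOpen
  have h1 : IsOpen {pq : (S1 × S1) × (S1 × S1) | StrictArc pq.1.1 pq.2.1 pq.1.2} :=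
    hT.preimage (f := fun pq : (S1 × S1) × (S1 × S1) => (pq.1.1, pq.2.1, pq.1.2)) (by fun_prop)
  have h2 : IsOpen {pq : (S1 × S1) × (S1 × S1) | StrictArc pq.1.2 pq.2.2 pq.1.1} :=
    hT.preimage (f := fun pq : (S1 × S1) × (S1 × S1) => (pq.1.2, pq.2.2, pq.1.1)) (by fun_prop)
  have h3 : IsOpen {pq : (S1 × S1) × (S1 × S1) | StrictArc pq.1.1 pq.2.2 pq.1.2} :=
    hT.preimage (f := fun pq : (S1 × S1) × (S1 × S1) => (pq.1.1, pq.2.2, pq.1.2)) (by fun_prop)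
  have h4 : IsOpen {pq : (S1 × S1) × (S1 × S1) | StrictArc pq.1.2 pq.2.1 pq.1.1} :=
    hT.preimage (f := fun pq : (S1 × S1) × (S1 × S1) => (pq.1.2, pq.2.1, pq.1.1)) (by fun_prop)
  have : {pq : (S1 × S1) × (S1 × S1) | Linked pq.1 pq.2} =
      ({pq | StrictArc pq.1.1 pq.2.1 pq.1.2} ∩ {pq | StrictArc pq.1.2 pq.2.2 pq.1.1}) ∪
      ({pq | StrictArc pq.1.1 pq.2.2 pq.1.2} ∩ {pq | StrictArc pq.1.2 pq.2.1 pq.1.1}) := by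
    ext pq; simp only [Set.mem_setOf_eq, Set.mem_union, Set.mem_inter_iff, Linked]
  rw [this]
  exact (h1.inter h2).union (h3.inter h4)

lemma isClosed_pairEq {X : Type*} [TopologicalSpace X] {f g h k : X → S1}
    (hf : Continuous f) (hg : Continuous g) (hh : Continuous h) (hk : Continuous k) :
    IsClosed {x | ({f x, g x} : Set S1) = {h x, k x}} := by
  have : {x | ({f x, g x} : Set S1) = {h x, k x}} =
      ({x | f x = h x} ∩ {x | g x = k x}) ∪ ({x | f x = k x} ∩ {x | g x = h x}) := by
    ext x; simp only [Set.mem_setOf_eq, Set.mem_union, Set.mem_inter_iff, Set.pair_eq_pair_iff]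
  rw [this]
  exact ((isClosed_eq hf hh).inter (isClosed_eq hg hk)).union
    ((isClosed_eq hf hk).inter (isClosed_eq hg hh))
lemma sig_loc_inj {d : ℕ} (hd : 1 ≤ d) {x y : S1} (hxy : dist x y < 1 / d)
    (h : sig d x = sig d y) : x = y := by
  have hz : sig d (x - y) = 0 := by
    simp only [sig, smul_sub] at *; rw [h, sub_self]
  obtain ⟨r, hr⟩ := S1_coe_surj (x - y)
  simp only at hr
  have h2 : ((d * r : ℝ) : S1) = 0 := by
    rw [← hr] at hz
    rw [show ((d : ℝ) * r) = d • r by simp, AddCircle.coe_nsmul]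
    simpa [sig] using hz
  rw [AddCircle.coe_eq_zero_iff] at h2
  obtain ⟨m, hm⟩ := h2
  simp only [zsmul_eq_mul, mul_one] at hm
  have hd0 : (0:ℝ) < d := by exact_mod_cast Nat.pos_of_ne_zero (by omega)
  have hrr : r = m / d := by field_simp; linarith [hm]
  have hnorm : dist x y = |(m : ℝ) / d - round ((m:ℝ)/d)| := by
    rw [dist_eq_norm, ← hr, hrr]
    simpa using AddCircle.norm_eq (p := (1:ℝ)) (x := (m:ℝ)/d)
  by_contra hne
  have hm0 : (m : ℝ) / d - round ((m:ℝ)/d) ≠ 0 := by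
    intro h0
    apply hne
    have : x - y = 0 := by
      rw [← hr, hrr, show ((m:ℝ)/d) = (round ((m:ℝ)/d) : ℝ) by linarith]
      rw [AddCircle.coe_eq_zero_iff]
      exact ⟨round ((m:ℝ)/d), by simp⟩
    exact sub_eq_zero.mp this
  set k : Int := round ((m:Real)/d) with hk
  have hint : (m : Real) - d * k ≠ 0 := by
    intro h0; apply hm0; field_simp; linarith
  have hge : |(m : Real) - d * k| ≥ 1 := by
    have hzz : (m - d * k : Int) ≠ 0 := by
      intro h0; apply hint
      have : ((m - d*k : Int) : Real) = 0 := by rw [h0]; simp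
      push_cast at this; linarith
    calc (1:Real) = ((1:Int):Real) := by norm_num
    _ ≤ |((m - d * k : Int) : Real)| := by exact_mod_cast Int.one_le_abs hzz
    _ = |(m : Real) - d * k| := by push_cast; ring_nf
  have habs : |(m:Real)/d - k| = |(m : Real) - d * k| / d := by
    rw [eq_div_iff (ne_of_gt hd0), ← abs_of_pos hd0, ← abs_mul]
    congr 1; field_simp; rw [abs_of_pos hd0]; ring
  rw [hnorm, habs] at hxy
  have := (div_lt_div_iff₀ hd0 hd0).mp hxy
  nlinarith

open Filter Topology in
lemma limit_ne_aux {d : ℕ} (hd : 1 ≤ d) {a b A B : ℕ → S1} {u Binf : S1}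
    (ha : Tendsto a atTop (𝓝 u)) (hb : Tendsto b atTop (𝓝 u))
    (hB : Tendsto B atTop (𝓝 Binf)) (hfar : sig d u ≠ Binf)
    (hsa : ∀ n, sig d (a n) = A n ∨ sig d (a n) = B n)
    (hsb : ∀ n, sig d (b n) = A n ∨ sig d (b n) = B n)
    (hne : ∀ n, a n ≠ b n) : False := by
  have hd0 : (0:ℝ) < d := by exact_mod_cast Nat.pos_of_ne_zero (by omega)
  have hsiga : Tendsto (fun n => sig d (a n)) atTop (𝓝 (sig d u)) :=
    ((sig_cont d).tendsto u).comp ha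
  have hsigb : Tendsto (fun n => sig d (b n)) atTop (𝓝 (sig d u)) :=
    ((sig_cont d).tendsto u).comp hb
  set δ := dist (sig d u) Binf with hδ
  have hδ0 : 0 < δ := dist_pos.mpr hfar
  have ev1 := Metric.tendsto_nhds.mp hsiga (δ/2) (by linarith)
  have ev2 := Metric.tendsto_nhds.mp hsigb (δ/2) (by linarith)
  have ev3 := Metric.tendsto_nhds.mp hB (δ/2) (by linarith)
  have ev4 := Metric.tendsto_nhds.mp ha (1/(2*d)) (by positivity)
  have ev5 := Metric.tendsto_nhds.mp hb (1/(2*d)) (by positivity)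
  have : ∀ᶠ _n in (atTop : Filter ℕ), False := by
    filter_upwards [ev1, ev2, ev3, ev4, ev5] with n h1 h2 h3 h4 h5
    have haB : sig d (a n) ≠ B n := by
      intro he
      rw [dist_comm, he] at h1
      have := dist_triangle (sig d u) (B n) Binf
      linarith
    have hbB : sig d (b n) ≠ B n := by
      intro he
      rw [dist_comm, he] at h2
      have := dist_triangle (sig d u) (B n) Binf
      linarith
    have heq : sig d (a n) = sig d (b n) := by
      rcases hsa n with h | h
      · rcases hsb n with h' | h'
        · rw [h, h']
        · exact absurd h' hbB
      · exact absurd h haB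
    have hclose : dist (a n) (b n) < 1 / d := by
      have : dist (a n) (b n) ≤ dist (a n) u + dist (b n) u := dist_triangle_right _ _ _
      have h1d : 1/(2*(d:ℝ)) + 1/(2*d) = 1/d := by
        rw [← add_div, div_eq_div_iff (by positivity) (by positivity)]; ring
      linarith
    exact hne n (sig_loc_inj hd hclose heq)
  obtain ⟨_, hfalse⟩ := this.exists
  exact hfalse

open Filter Topology in
lemma limit_ne {d : ℕ} (hd : 1 ≤ d) {a b A B : ℕ → S1} {α β Ainf Binf : S1}
    (ha : Tendsto a atTop (𝓝 α)) (hb : Tendsto b atTop (𝓝 β))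
    (hA : Tendsto A atTop (𝓝 Ainf)) (hB : Tendsto B atTop (𝓝 Binf)) (hAB : Ainf ≠ Binf)
    (hsa : ∀ n, sig d (a n) = A n ∨ sig d (a n) = B n)
    (hsb : ∀ n, sig d (b n) = A n ∨ sig d (b n) = B n)
    (hne : ∀ n, a n ≠ b n) : α ≠ β := by
  intro h
  subst h
  by_cases hcase : sig d α = Binf
  · exact limit_ne_aux hd ha hb hA (by rw [hcase]; exact fun h => hAB h.symm)
      (fun n => (hsa n).symm) (fun n => (hsb n).symm) hne
  · exact limit_ne_aux hd ha hb hB hcase hsa hsb hne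

/-- Two chords are disjoint: they share no endpoint and are not linked. -/
def ChordDisj (p q : S1 × S1) : Prop :=
  p.1 ≠ q.1 ∧ p.1 ≠ q.2 ∧ p.2 ≠ q.1 ∧ p.2 ≠ q.2 ∧ ¬ Linked p q

/-- The σ_d-image of a chord, as the (unordered) set of images of the endpoints. -/
def chordIm (d : ℕ) (p : S1 × S1) : Set S1 := {sig d p.1, sig d p.2}
/-- A full sibling collection: `d` pairwise disjoint chords with a common σ_d-image. -/
def SiblingCollection (d : ℕ) (f : Fin d → S1 × S1) : Prop :=
  (∀ i j, i ≠ j → ChordDisj (f i) (f j)) ∧ ∀ i j, chordIm d (f i) = chordIm d (f j)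

/-- A family of chords has the sibling property: every non-critical chord of the family
is a member of a full sibling collection contained in the family. -/
def HasSiblings (d : ℕ) (W : Set (S1 × S1)) : Prop :=
  ∀ p ∈ W, sig d p.1 ≠ sig d p.2 →
    ∃ f : Fin d → S1 × S1, (∀ i, f i ∈ W) ∧ (∃ i, f i = p) ∧ SiblingCollection d f

/-- A σ_d-invariant web: a family of chords with the sibling property, containing all
degenerate chords, closed under σ_d-images, and with every chord having a preimage chord. -/
def IsInvWeb (d : ℕ) (W : Set (S1 × S1)) : Prop :=
  HasSiblings d W ∧
  (∀ x : S1, (x, x) ∈ W) ∧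
  (∀ p ∈ W, (sig d p.1, sig d p.2) ∈ W) ∧
  (∀ p ∈ W, ∃ q ∈ W, ({sig d q.1, sig d q.2} : Set S1) = {p.1, p.2})

open Filter Topology

/-- The closure (in the space of chords, i.e. in `S1 × S1`) of a σ_d-invariant
web is again a σ_d-invariant web. -/
theorem closure_of_invariant_web (d : ℕ) (hd : 2 ≤ d) (W : Set (S1 × S1))
    (hW : IsInvWeb d W) : IsInvWeb d (closure W) := by
  obtain ⟨hSib, hDeg, hIm, hPre⟩ := hW
  have hd1 : 1 ≤ d := by omega
  refine ⟨?_, fun x => subset_closure (hDeg x), ?_, ?_⟩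
  · -- HasSiblings
    intro p hp hne
    obtain ⟨u, huW, hulim⟩ := mem_closure_iff_seq_limit.mp hp
    haveI : NeZero d := ⟨by omega⟩
    have hu1 : Tendsto (fun n => (u n).1) atTop (𝓝 p.1) :=
      (continuous_fst.tendsto p).comp hulim
    have hu2 : Tendsto (fun n => (u n).2) atTop (𝓝 p.2) :=
      (continuous_snd.tendsto p).comp hulim
    -- eventual non-criticality
    have hevent : ∀ᶠ n in atTop, sig d (u n).1 ≠ sig d (u n).2 := by
      have hopen : IsOpen {x : S1 × S1 | x.1 ≠ x.2} := isOpen_ne_fun continuous_fst continuous_snd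
      have hmem : (sig d p.1, sig d p.2) ∈ {x : S1 × S1 | x.1 ≠ x.2} := hne
      have ht : Tendsto (fun n => (sig d (u n).1, sig d (u n).2)) atTop
          (𝓝 (sig d p.1, sig d p.2)) :=
        (((sig_cont d).tendsto p.1).comp hu1).prodMk_nhds (((sig_cont d).tendsto p.2).comp hu2)
      exact ht.eventually (hopen.eventually_mem hmem)
    obtain ⟨N, hN⟩ := eventually_atTop.mp hevent
    set v : ℕ → S1 × S1 := fun n => u (n + N) with hv
    have hvW : ∀ n, v n ∈ W := fun n => huW (n + N)
    have hvne : ∀ n, sig d (v n).1 ≠ sig d (v n).2 := fun n => hN (n + N) (by omega)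
    have hvlim : Tendsto v atTop (𝓝 p) := hulim.comp (tendsto_add_atTop_nat N)
    choose f hfW hfp hfSib using fun n => hSib (v n) (hvW n) (hvne n)
    choose idx hidx using hfp
    set g : ℕ → Fin d → S1 × S1 := fun n => f n ∘ Equiv.swap 0 (idx n) with hg
    have hg0 : ∀ n, g n 0 = v n := by
      intro n
      simp only [hg, Function.comp_apply, Equiv.swap_apply_left]
      exact hidx n
    have hgW : ∀ n i, g n i ∈ W := fun n i => hfW n _
    have hgD : ∀ n, ∀ i j, i ≠ j → ChordDisj (g n i) (g n j) := by
      intro n i j hij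
      exact (hfSib n).1 _ _ ((Equiv.swap 0 (idx n)).injective.ne hij)
    have hgI : ∀ n, ∀ i j, chordIm d (g n i) = chordIm d (g n j) :=
      fun n i j => (hfSib n).2 _ _
    obtain ⟨F, -, φ, hφ, hgF⟩ := isCompact_univ.tendsto_subseq
      (x := g) (fun n => Set.mem_univ (g n))
    have hpt : ∀ i, Tendsto (fun k => g (φ k) i) atTop (𝓝 (F i)) := by
      intro i
      exact (tendsto_pi_nhds.mp hgF i)
    have hvφ : Tendsto (fun k => v (φ k)) atTop (𝓝 p) := hvlim.comp hφ.tendsto_atTop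
    have hF0 : F 0 = p := by
      refine tendsto_nhds_unique (hpt 0) ?_
      simpa only [hg0] using hvφ
    have hFW : ∀ i, F i ∈ closure W := fun i =>
      mem_closure_of_tendsto (hpt i) (Eventually.of_forall fun k => hgW _ i)
    -- common image property in the limit
    have hFI : ∀ i j, chordIm d (F i) = chordIm d (F j) := by
      intro i j
      have hC : IsClosed {x : (S1 × S1) × (S1 × S1) |
          ({sig d x.1.1, sig d x.1.2} : Set S1) = {sig d x.2.1, sig d x.2.2}} :=
        isClosed_pairEq ((sig_cont d).comp (continuous_fst.comp continuous_fst))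
          ((sig_cont d).comp (continuous_snd.comp continuous_fst))
          ((sig_cont d).comp (continuous_fst.comp continuous_snd))
          ((sig_cont d).comp (continuous_snd.comp continuous_snd))
      have := hC.mem_of_tendsto ((hpt i).prodMk_nhds (hpt j))
        (Eventually.of_forall fun k => hgI (φ k) i j)
      exact this
    -- membership of endpoints' images in the limit pair
    have hmemAB : ∀ i, ∀ k, (sig d ((g (φ k) i).1) = sig d ((v (φ k)).1) ∨
        sig d ((g (φ k) i).1) = sig d ((v (φ k)).2)) ∧
        (sig d ((g (φ k) i).2) = sig d ((v (φ k)).1) ∨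
        sig d ((g (φ k) i).2) = sig d ((v (φ k)).2)) := by
      intro i k
      have h := hgI (φ k) i 0
      rw [hg0] at h
      constructor
      · have : sig d ((g (φ k) i).1) ∈ chordIm d (g (φ k) i) := Set.mem_insert _ _
        rw [h] at this
        exact this
      · have : sig d ((g (φ k) i).2) ∈ chordIm d (g (φ k) i) :=
          Set.mem_insert_of_mem _ rfl
        rw [h] at this
        exact this
    have hA : Tendsto (fun k => sig d ((v (φ k)).1)) atTop (𝓝 (sig d p.1)) :=
      ((sig_cont d).tendsto p.1).comp ((continuous_fst.tendsto p).comp hvφ)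
    have hB : Tendsto (fun k => sig d ((v (φ k)).2)) atTop (𝓝 (sig d p.2)) :=
      ((sig_cont d).tendsto p.2).comp ((continuous_snd.tendsto p).comp hvφ)
    have hpt1 : ∀ i, Tendsto (fun k => (g (φ k) i).1) atTop (𝓝 (F i).1) :=
      fun i => (continuous_fst.tendsto (F i)).comp (hpt i)
    have hpt2 : ∀ i, Tendsto (fun k => (g (φ k) i).2) atTop (𝓝 (F i).2) :=
      fun i => (continuous_snd.tendsto (F i)).comp (hpt i)
    refine ⟨F, hFW, ⟨0, hF0⟩, ?_, hFI⟩
    intro i j hij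
    have hD : ∀ k, ChordDisj (g (φ k) i) (g (φ k) j) := fun k => hgD (φ k) i j hij
    refine ⟨?_, ?_, ?_, ?_, ?_⟩
    · exact limit_ne hd1 (hpt1 i) (hpt1 j) hA hB hne
        (fun k => (hmemAB i k).1) (fun k => (hmemAB j k).1) (fun k => (hD k).1)
    · exact limit_ne hd1 (hpt1 i) (hpt2 j) hA hB hne
        (fun k => (hmemAB i k).1) (fun k => (hmemAB j k).2) (fun k => (hD k).2.1)
    · exact limit_ne hd1 (hpt2 i) (hpt1 j) hA hB hne
        (fun k => (hmemAB i k).2) (fun k => (hmemAB j k).1) (fun k => (hD k).2.2.1)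
    · exact limit_ne hd1 (hpt2 i) (hpt2 j) hA hB hne
        (fun k => (hmemAB i k).2) (fun k => (hmemAB j k).2) (fun k => (hD k).2.2.2.1)
    · -- not linked
      have hC : IsClosed {x : (S1 × S1) × (S1 × S1) | ¬ Linked x.1 x.2} := by
        have := linked_isOpen.isClosed_compl
        convert this using 1
        ext x; simp
      exact hC.mem_of_tendsto ((hpt i).prodMk_nhds (hpt j))
        (Eventually.of_forall fun k => (hD k).2.2.2.2)
  · -- forward invariance
    intro p hp
    obtain ⟨u, huW, hulim⟩ := mem_closure_iff_seq_limit.mp hp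
    have ht : Tendsto (fun n => (sig d (u n).1, sig d (u n).2)) atTop
        (𝓝 (sig d p.1, sig d p.2)) :=
      (((sig_cont d).tendsto p.1).comp ((continuous_fst.tendsto p).comp hulim)).prodMk_nhds
        (((sig_cont d).tendsto p.2).comp ((continuous_snd.tendsto p).comp hulim))
    exact mem_closure_of_tendsto ht (Eventually.of_forall fun n => hIm _ (huW n))
  · -- preimages
    intro p hp
    obtain ⟨u, huW, hulim⟩ := mem_closure_iff_seq_limit.mp hp
    choose q hqW hqim using fun n => hPre (u n) (huW n)
    obtain ⟨l, -, φ, hφ, hql⟩ := isCompact_univ.tendsto_subseq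
      (x := q) (fun n => Set.mem_univ (q n))
    refine ⟨l, mem_closure_of_tendsto hql (Eventually.of_forall fun n => hqW _), ?_⟩
    have hC : IsClosed {x : (S1 × S1) × (S1 × S1) |
        ({sig d x.1.1, sig d x.1.2} : Set S1) = {x.2.1, x.2.2}} :=
      isClosed_pairEq ((sig_cont d).comp (continuous_fst.comp continuous_fst))
        ((sig_cont d).comp (continuous_snd.comp continuous_fst))
        (continuous_fst.comp continuous_snd) (continuous_snd.comp continuous_snd)
    have := hC.mem_of_tendsto (hql.prodMk_nhds (hulim.comp hφ.tendsto_atTop))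
      (Eventually.of_forall fun k => hqim (φ k))
    exact this
end
end

section
/- Let d ≥ 2 and let ∼ be a σ_d-invariant laminational equivalence relation with all classes finite. Then no class contains both a periodic point of period n and a point that is not periodic of period n joined by an edge of its convex hull; consequently, if a chord ℓ has some forward σ_d-image connecting an n-periodic point to a point which is not n-periodic, then ℓ cannot be a leaf of any invariant q-lamination. -/
noncomputable section

/-- A σ_d-invariant laminational equivalence relation on the circle. -/
structure LamEq (d : ℕ) where
  /-- the relation -/
  r : S1 → S1 → Prop
  refl : ∀ x, r x x
  symm : ∀ {x y}, r x y → r y x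
  trans : ∀ {x y z}, r x y → r y z → r x z
  /-- (E1) the graph of the relation is closed -/
  closed : IsClosed {p : S1 × S1 | r p.1 p.2}
  /-- (E3) all classes are finite -/
  finite : ∀ x, {y | r x y}.Finite
  /-- (E2) convex hulls of distinct classes are unlinked (hence disjoint) -/
  unlinked : ∀ x y z w, r x y → r z w → ¬ r x z → ¬ Linked (x, y) (z, w)
  /-- (D1) the image of a class is a class -/
  forward : ∀ x, sig d '' {y | r x y} = {z | r (sig d x) z}
  /-- (D3) on classes with more than two points, σ_d is a positively oriented covering map
  onto the image class: every hole of a class maps to a degenerate arc or to a hole of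
  the image class. -/
  posOriented : ∀ x, 2 < Set.ncard {y | r x y} →
    ∀ s t, r x s → r x t → s ≠ t → (∀ z, r x z → ¬ StrictArc s z t) →
      sig d s = sig d t ∨ ∀ w, r (sig d x) w → ¬ StrictArc (sig d s) w (sig d t)

/-- `{x, y}` is an edge of the convex hull of the class of `x`: both endpoints lie in one
class and one of the two open arcs determined by them contains no point of the class. -/
def LamEq.IsEdge {d : ℕ} (E : LamEq d) (x y : S1) : Prop :=
  E.r x y ∧ x ≠ y ∧
    ((∀ z, E.r x z → ¬ StrictArc x z y) ∨ (∀ z, E.r x z → ¬ StrictArc y z x))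

----------------- circle lemmas (verified) -----------------

lemma coe_toIcoMod (x r : ℝ) : ((toIcoMod one_pos x r : ℝ) : S1) = (r : S1) := by
  rw [QuotientAddGroup.eq]
  refine ⟨toIcoDiv one_pos x r, ?_⟩
  show toIcoDiv one_pos x r • (1:ℝ) = -toIcoMod one_pos x r + r
  rw [neg_add_eq_sub]
  exact (self_sub_toIcoMod one_pos x r).symm

lemma int_not_mem_Ioo {k : ℤ} (h0 : (0:ℝ) < k) (h1 : (k:ℝ) < 1) : False := by
  have : (0:ℤ) < k := by exact_mod_cast h0
  have : k < 1 := by exact_mod_cast h1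
  omega

lemma strictArc_ne {a b c : S1} (h : StrictArc a b c) : b ≠ a ∧ b ≠ c := by
  obtain ⟨x, y, z, hx, hy, hz, hxy, hyz, hzx⟩ := h
  constructor
  · rintro rfl
    rw [← hx, QuotientAddGroup.eq] at hy
    obtain ⟨k, hk⟩ := hy
    have hk' : (k:ℝ) = -y + x := by simpa using hk
    exact int_not_mem_Ioo (k := -k) (by push_cast; linarith) (by push_cast; linarith)
  · rintro rfl
    rw [← hz, QuotientAddGroup.eq] at hy
    obtain ⟨k, hk⟩ := hy
    have hk' : (k:ℝ) = -y + z := by simpa using hk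
    exact int_not_mem_Ioo (k := k) (by linarith) (by linarith)

lemma strictArc_cycle {a b c : S1} (h : StrictArc a b c) : StrictArc b c a := by
  obtain ⟨x, y, z, hx, hy, hz, hxy, hyz, hzx⟩ := h
  exact ⟨y, z, x + 1, hy, hz, by rw [AddCircle.coe_add_period]; exact hx, hyz, hzx, by linarith⟩

lemma strictArc_trichotomy {a b c : S1} (hba : b ≠ a) (hca : c ≠ a) (hbc : b ≠ c) :
    StrictArc a b c ∨ StrictArc a c b := by
  obtain ⟨x, hx⟩ := QuotientAddGroup.mk_surjective a
  obtain ⟨rb, hrb⟩ := QuotientAddGroup.mk_surjective b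
  obtain ⟨rc, hrc⟩ := QuotientAddGroup.mk_surjective c
  set y := toIcoMod one_pos x rb with hy
  set z := toIcoMod one_pos x rc with hz
  have hyb : (y : S1) = b := by rw [hy, coe_toIcoMod, hrb]
  have hzc : (z : S1) = c := by rw [hz, coe_toIcoMod, hrc]
  have hyI := toIcoMod_mem_Ico one_pos x rb
  have hzI := toIcoMod_mem_Ico one_pos x rc
  rw [← hy] at hyI; rw [← hz] at hzI
  have hxy : x < y := lt_of_le_of_ne hyI.1 (fun h => hba (by rw [← hyb, ← hx, h]))
  have hxz : x < z := lt_of_le_of_ne hzI.1 (fun h => hca (by rw [← hzc, ← hx, h]))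
  have hyz : y ≠ z := fun h => hbc (by rw [← hyb, ← hzc, h])
  rcases lt_or_gt_of_ne hyz with h | h
  · exact Or.inl ⟨x, y, z, hx, hyb, hzc, hxy, h, hzI.2⟩
  · exact Or.inr ⟨x, z, y, hx, hzc, hyb, hxz, h, hyI.2⟩

----------------- lamination lemmas -----------------

variable {d : ℕ} (E : LamEq d)

/-- a positively-oriented hole at the boundary of a class -/
def LamEq.Hole1 (x y : S1) : Prop :=
  E.r x y ∧ x ≠ y ∧ ∀ z, E.r x z → ¬ StrictArc x z y

lemma forwardIter : ∀ (m : ℕ) (x : S1),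
    (sig d)^[m] '' {y | E.r x y} = {z | E.r ((sig d)^[m] x) z} := by
  intro m
  induction m with
  | zero => intro x; simp
  | succ m ih =>
    intro x
    rw [Function.iterate_succ', Function.comp_apply, ← E.forward, ← ih]
    exact (Set.image_comp _ _ _)

lemma hole1_image {x y : S1} (h : E.Hole1 x y) :
    sig d x = sig d y ∨ E.Hole1 (sig d x) (sig d y) := by
  obtain ⟨hr, hne, hh⟩ := h
  by_cases heq : sig d x = sig d y
  · exact Or.inl heq
  right
  have hrim : E.r (sig d x) (sig d y) := by
    have hmem : sig d y ∈ sig d '' {z | E.r x z} := ⟨y, hr, rfl⟩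
    rw [E.forward] at hmem
    exact hmem
  refine ⟨hrim, heq, ?_⟩
  by_cases hcard : 2 < Set.ncard {z | E.r x z}
  · rcases E.posOriented x hcard x y (E.refl x) hr hne hh with h | h
    · exact absurd h heq
    · exact h
  · -- the class is exactly {x, y}
    have hsub : ({x, y} : Set S1) ⊆ {z | E.r x z} := by
      rintro w (rfl | rfl)
      · exact E.refl _
      · exact hr
    have hclass : ({x, y} : Set S1) = {z | E.r x z} :=
      Set.eq_of_subset_of_ncard_le hsub
        (by rw [Set.ncard_pair hne]; exact not_lt.mp hcard) (E.finite x)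
    intro w hw harc
    have hw' : w ∈ sig d '' {z | E.r x z} := by rw [E.forward]; exact hw
    rw [← hclass] at hw'
    simp only [Set.image_insert_eq, Set.image_singleton, Set.mem_insert_iff,
      Set.mem_singleton_iff] at hw'
    rcases hw' with rfl | rfl
    · exact (strictArc_ne harc).1 rfl
    · exact (strictArc_ne harc).2 rfl

lemma hole1_iter {x y : S1} (h : E.Hole1 x y) (m : ℕ) :
    (sig d)^[m] x = (sig d)^[m] y ∨ E.Hole1 ((sig d)^[m] x) ((sig d)^[m] y) := by
  induction m with
  | zero => exact Or.inr h
  | succ m ih =>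
    rw [Function.iterate_succ_apply', Function.iterate_succ_apply']
    rcases ih with heq | hh
    · exact Or.inl (by rw [heq])
    · exact hole1_image E hh

lemma periodic_injOn {x : S1} {n : ℕ} (hper : (sig d)^[n] x = x) :
    Set.InjOn ((sig d)^[n]) {z | E.r x z} := by
  have him : (sig d)^[n] '' {z | E.r x z} = {z | E.r x z} := by
    rw [forwardIter E n x, hper]
  have hmaps : Set.MapsTo ((sig d)^[n]) {z | E.r x z} {z | E.r x z} :=
    Set.mapsTo_iff_image_subset.mpr him.subset
  have hsurj : Set.SurjOn ((sig d)^[n]) {z | E.r x z} {z | E.r x z} := him.superset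
  exact (((E.finite x).surjOn_iff_bijOn_of_mapsTo hmaps).mp hsurj).injOn

lemma hole1_succ_unique {x y y' : S1} (h : E.Hole1 x y) (h' : E.Hole1 x y') : y = y' := by
  by_contra hne
  rcases strictArc_trichotomy (Ne.symm h.2.1) (Ne.symm h'.2.1) hne with harc | harc
  · exact h'.2.2 y h.1 harc
  · exact h.2.2 y' h'.1 harc

lemma hole1_pred_unique {x y y' : S1} (h : E.Hole1 y x) (h' : E.Hole1 y' x) : y = y' := by
  by_contra hne
  have hry' : E.r y y' := E.trans h.1 (E.symm h'.1)
  rcases strictArc_trichotomy (Ne.symm hne) (Ne.symm h.2.1) h'.2.1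
    with harc | harc
  · exact h.2.2 y' hry' harc
  · exact h'.2.2 y (E.symm hry') (strictArc_cycle (strictArc_cycle harc))

lemma edge_periodic {x y : S1} {n : ℕ} (he : E.IsEdge x y)
    (hper : (sig d)^[n] x = x) : (sig d)^[n] y = y := by
  obtain ⟨hr, hne, hcase⟩ := he
  have hinj := periodic_injOn E hper
  have hyx : y ∈ {z | E.r x z} := hr
  have hxx : x ∈ {z | E.r x z} := E.refl x
  rcases hcase with h | h
  · have hh : E.Hole1 x y := ⟨hr, hne, h⟩
    rcases hole1_iter E hh n with heq | hh'
    · exact absurd (hinj hyx hxx (by rw [← heq])) (Ne.symm hne)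
    · rw [hper] at hh'
      exact (hole1_succ_unique E hh' hh)
  · have hh : E.Hole1 y x := ⟨E.symm hr, Ne.symm hne, fun z hz => h z (E.trans hr hz)⟩
    rcases hole1_iter E hh n with heq | hh'
    · exact absurd (hinj hyx hxx heq) (Ne.symm hne)
    · rw [hper] at hh'
      exact (hole1_pred_unique E hh' hh)

lemma edge_symm {x y : S1} (he : E.IsEdge x y) : E.IsEdge y x := by
  obtain ⟨hr, hne, hcase⟩ := he
  refine ⟨E.symm hr, Ne.symm hne, ?_⟩
  rcases hcase with h | h
  · exact Or.inr (fun z hz => h z (E.trans hr hz))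
  · exact Or.inl (fun z hz => h z (E.trans hr hz))

lemma edge_iter {x y : S1} (he : E.IsEdge x y) (m : ℕ) :
    (sig d)^[m] x = (sig d)^[m] y ∨ E.IsEdge ((sig d)^[m] x) ((sig d)^[m] y) := by
  obtain ⟨hr, hne, hcase⟩ := he
  rcases hcase with h | h
  · rcases hole1_iter E ⟨hr, hne, h⟩ m with heq | ⟨hr', hne', hh'⟩
    · exact Or.inl heq
    · exact Or.inr ⟨hr', hne', Or.inl hh'⟩
  · have hh : E.Hole1 y x := ⟨E.symm hr, Ne.symm hne, fun z hz => h z (E.trans hr hz)⟩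
    rcases hole1_iter E hh m with heq | ⟨hr', hne', hh'⟩
    · exact Or.inl heq.symm
    · exact Or.inr ⟨E.symm hr', Ne.symm hne',
        Or.inr (fun z hz => hh' z (E.trans hr' hz))⟩


/-- For a σ_d-invariant laminational equivalence relation, no class has an
edge of its convex hull joining an `n`-periodic point (`σ_d^n x = x`) to a point which is
not `n`-periodic. Consequently, if some forward image of a chord `{a, b}` connects an
`n`-periodic point to a non-`n`-periodic point, then `{a, b}` is not a leaf (edge of a
class) of any invariant q-lamination. -/
theorem improper_chord_not_a_leaf (d : ℕ) (hd : 2 ≤ d) (n : ℕ) (hn : 0 < n) :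
    (∀ E : LamEq d, ∀ x y : S1, E.IsEdge x y →
      (sig d)^[n] x = x → (sig d)^[n] y = y) ∧
    (∀ a b : S1,
      (∃ m : ℕ, (sig d)^[n] ((sig d)^[m] a) = (sig d)^[m] a ∧
        (sig d)^[n] ((sig d)^[m] b) ≠ (sig d)^[m] b) →
      ∀ E : LamEq d, ¬ E.IsEdge a b ∧ ¬ E.IsEdge b a) := by
  constructor
  · intro E x y he hper
    exact edge_periodic E he hper
  · intro a b ⟨m, h1, h2⟩ E
    have key : ¬ E.IsEdge a b := by
      intro he
      rcases edge_iter E he m with heq | he'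
      · exact h2 (by rw [← heq, h1, heq])
      · exact h2 (edge_periodic E he' h1)
    exact ⟨key, fun he => key (edge_symm E he)⟩
end
end

section
/- Let d ≥ 3 and suppose a, b are distinct fixed points of σ_d such that a is a vertex of a portal C_a and b is a vertex of a different portal C_b, where C_a, C_b belong to a family P⁺ of pairwise disjoint all-critical convex polygons whose complement in the disk has exactly d components. Then at least one complementary component of ⋃P⁺ contains at least two fixed points of σ_d in its closure. (Counting argument: σ_d has exactly d−1 fixed points; a and b each lie in the closures of exactly two components, so the remaining d−3 fixed points are distributed among the remaining d−4 components, forcing a component with two fixed points.) -/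
noncomputable section

def circleMap1 : ℝ → ℂ := fun x => Complex.exp (2 * Real.pi * Complex.I * (x : ℂ))

theorem circleMap1_periodic : Function.Periodic circleMap1 1 := by
  intro x
  unfold circleMap1
  push_cast
  rw [mul_add, Complex.exp_add, mul_one, Complex.exp_two_pi_mul_I, mul_one]

/-- The standard embedding of the circle `ℝ/ℤ` into the plane (unit circle in `ℂ`). -/
def toC : S1 → ℂ := circleMap1_periodic.lift

/-- The chord with endpoints `p.1, p.2`, realized as a straight segment in the closed disk. -/
def chordSeg (p : S1 × S1) : Set ℂ := segment ℝ (toC p.1) (toC p.2)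

/-! ### Auxiliary lemmas -/

open Complex Set

lemma toC_coe (x : ℝ) : toC (x : S1) = Complex.exp (2 * Real.pi * Complex.I * x) :=
  circleMap1_periodic.lift_coe x

lemma norm_toC (x : S1) : ‖toC x‖ = 1 := by
  induction x using QuotientAddGroup.induction_on with
  | H x =>
    rw [toC_coe, Complex.norm_exp]
    norm_num [Complex.mul_re]

lemma sphere_hull_mem {S : Set ℂ} (hS : S ⊆ Metric.sphere (0:ℂ) 1) {z : ℂ}
    (hz : z ∈ convexHull ℝ S) (hz1 : ‖z‖ = 1) : z ∈ S := by
  have hball : convexHull ℝ S ⊆ Metric.closedBall (0:ℂ) 1 := by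
    apply convexHull_min (hS.trans Metric.sphere_subset_closedBall) (convex_closedBall _ _)
  refine extremePoints_convexHull_subset (A := S) (𝕜 := ℝ) ?_
  rw [mem_extremePoints]
  refine ⟨hz, fun x hx y hy hseg => ?_⟩
  by_cases hxy : x = y
  · subst hxy
    rw [openSegment_same] at hseg
    simp_all
  · exfalso
    have hsc := strictConvex_closedBall ℝ (0:ℂ) 1
    rcases hseg with ⟨s, t, hs, ht, hst, rfl⟩
    have : s • x + t • y ∈ interior (Metric.closedBall (0:ℂ) 1) :=
      hsc.openSegment_subset (hball hx) (hball hy) hxy ⟨s, t, hs, ht, hst, rfl⟩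
    rw [interior_closedBall (0:ℂ) (by norm_num)] at this
    simp only [Metric.mem_ball, dist_zero_right] at this
    linarith [hz1 ▸ this]

lemma h_eq (s t : ℝ) : Real.sin (t - s) + Real.sin s - Real.sin t
    = 2 * Real.sin (s/2) * (Real.cos (s/2) - Real.cos (t - s/2)) := by
  have key : ∀ a b : ℝ, Real.sin (a - b) + Real.sin (2*b) - Real.sin (a + b)
      = 2 * Real.sin b * (Real.cos b - Real.cos a) := by
    intro a b
    rw [Real.sin_sub, Real.sin_add, Real.sin_two_mul]; ring
  have := key (t - s/2) (s/2)
  rw [show t - s/2 - s/2 = t - s by ring, show 2*(s/2) = s by ring,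
    show t - s/2 + s/2 = t by ring] at this
  exact this

lemma h_neg {s t : ℝ} (hs0 : 0 < s) (hs2 : s < 2*Real.pi) (ht0 : 0 < t) (hts : t < s) :
    Real.sin (t - s) + Real.sin s - Real.sin t < 0 := by
  rw [h_eq]
  have h1 : 0 < Real.sin (s/2) := Real.sin_pos_of_pos_of_lt_pi (by linarith) (by linarith)
  have h2 : Real.cos (s/2) < Real.cos (t - s/2) := by
    rw [← Real.cos_abs (t - s/2)]
    apply Real.cos_lt_cos_of_nonneg_of_le_pi (abs_nonneg _) (by linarith)
    rw [abs_lt]; constructor <;> [linarith; skip]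
    rcases abs_cases (t - s/2) with ⟨h, _⟩ | ⟨h, _⟩ <;> linarith
  nlinarith

lemma h_pos {s t : ℝ} (hs0 : 0 < s) (ht0 : s/2 - Real.pi < t) (hts : t < 0) :
    0 < Real.sin (t - s) + Real.sin s - Real.sin t := by
  rw [h_eq]
  have h1 : 0 < Real.sin (s/2) := Real.sin_pos_of_pos_of_lt_pi (by linarith) (by linarith)
  have h2 : Real.cos (t - s/2) < Real.cos (s/2) := by
    have he : Real.cos (t - s/2) = Real.cos (s/2 - t) := by
      rw [← Real.cos_neg]; ring_nf
    rw [he]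
    apply Real.cos_lt_cos_of_nonneg_of_le_pi (by linarith) (by linarith) (by linarith)
  nlinarith

lemma fval (u : ℂ) (hu : ‖u‖ = 1) (s t : ℝ) :
    ((starRingEnd ℂ) (u * Complex.exp (s*I) - u) * (u * Complex.exp (t*I) - u)).im
      = Real.sin (t-s) + Real.sin s - Real.sin t := by
  have hn : u.re^2 + u.im^2 = 1 := by
    have h2 : Complex.normSq u = 1 := by
      rw [Complex.normSq_eq_norm_sq, hu]; norm_num
    simpa [Complex.normSq_apply, sq] using h2
  rw [Real.sin_sub]
  simp only [Complex.exp_mul_I, ← Complex.ofReal_cos, ← Complex.ofReal_sin]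
  simp only [Complex.mul_im, Complex.mul_re, Complex.sub_re, Complex.sub_im,
    Complex.add_re, Complex.add_im, Complex.ofReal_re, Complex.ofReal_im,
    Complex.I_re, Complex.I_im, Complex.conj_re, Complex.conj_im, map_sub, map_mul,
    map_add]
  linear_combination (Real.cos s * Real.sin t + Real.sin s - Real.sin s * Real.cos t
    - Real.sin t) * hn

lemma line_mem_segment {u u' z : ℂ} (hu : ‖u‖ = 1) (hu' : ‖u'‖ = 1) (huu : u ≠ u')
    (hz : ‖z‖ < 1) (hf : ((starRingEnd ℂ) (u' - u) * (z - u)).im = 0) :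
    z ∈ segment ℝ u u' := by
  set w := u' - u with hw
  have hw0 : w ≠ 0 := sub_ne_zero.mpr (Ne.symm huu)
  have hnw : Complex.normSq w ≠ 0 := by simpa using hw0
  set c := (starRingEnd ℂ) w * (z - u) with hc
  have hcre : c = (c.re : ℂ) := by
    apply Complex.ext <;> simp [hf]
  set t : ℝ := c.re / Complex.normSq w with ht
  have hzw : z - u = (t : ℂ) * w := by
    have h1 : (Complex.normSq w : ℂ) * (z - u) = (c.re : ℂ) * w := by
      have h0 : ((Complex.normSq w : ℝ) : ℂ) = (starRingEnd ℂ) w * w := by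
        rw [mul_comm, Complex.mul_conj]
      rw [h0]
      calc (starRingEnd ℂ) w * w * (z - u) = w * ((starRingEnd ℂ) w * (z - u)) := by ring
      _ = w * c := by rw [hc]
      _ = (c.re : ℂ) * w := by rw [← hcre]; ring
    have h2 : ((Complex.normSq w : ℝ) : ℂ) ≠ 0 := by exact_mod_cast hnw
    rw [ht, Complex.ofReal_div, div_mul_eq_mul_div, eq_div_iff h2]
    linear_combination h1
  have hzw' : z - u = (t : ℂ) * (u' - u) := by rw [← hw]; exact hzw
  have hun : u.re^2 + u.im^2 = 1 := by
    have h2 : Complex.normSq u = 1 := by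
      rw [Complex.normSq_eq_norm_sq, hu]; norm_num
    simpa [Complex.normSq_apply, sq] using h2
  have hun' : (u.re + w.re)^2 + (u.im + w.im)^2 = 1 := by
    have h2 : Complex.normSq u' = 1 := by
      rw [Complex.normSq_eq_norm_sq, hu']; norm_num
    have he : u' = u + w := by rw [hw]; ring
    rw [he] at h2
    simpa [Complex.normSq_apply, sq] using h2
  have hud : 2*(u.re*w.re + u.im*w.im) = -(w.re^2 + w.im^2) := by
    linear_combination hun' - hun
  have hzre : z.re = u.re + t * w.re := by
    have := congrArg Complex.re hzw; simp at this; linarith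
  have hzim : z.im = u.im + t * w.im := by
    have := congrArg Complex.im hzw; simp at this; linarith
  have hwpos : 0 < w.re^2 + w.im^2 := by
    have := Complex.normSq_pos.mpr hw0
    simpa [Complex.normSq_apply, sq] using this
  have hzn : z.re^2 + z.im^2 < 1 := by
    have h2 : Complex.normSq z < 1 := by
      rw [Complex.normSq_eq_norm_sq]
      nlinarith [norm_nonneg z]
    simpa [Complex.normSq_apply, sq] using h2
  have hz2 : z.re^2 + z.im^2 = 1 + (t^2 - t)*(w.re^2 + w.im^2) := by
    rw [hzre, hzim]
    linear_combination hun + t*hud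
  have key : t^2 - t < 0 := by nlinarith
  have ht0 : 0 < t := by nlinarith [sq_nonneg t]
  have ht1 : t < 1 := by nlinarith
  refine ⟨1 - t, t, by linarith, by linarith, by ring, ?_⟩
  rw [Complex.real_smul, Complex.real_smul]
  push_cast
  linear_combination (-1 : ℂ) * hzw'

lemma expt_injOn (u : ℂ) (hu0 : u ≠ 0) (lo hi : ℝ) (h : hi - lo ≤ 2*Real.pi) :
    Set.InjOn (fun t : ℝ => u * Complex.exp (t*I)) (Set.Ioo lo hi) := by
  intro t1 h1 t2 h2 heq
  simp only at heq
  have he : Complex.exp (t1*I) = Complex.exp (t2*I) := mul_left_cancel₀ hu0 heq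
  have h3 : Complex.exp ((t1 - t2 : ℝ)*I) = 1 := by
    rw [show ((t1 - t2 : ℝ) : ℂ)*I = t1*I - t2*I by push_cast; ring, Complex.exp_sub, he,
      div_self (Complex.exp_ne_zero _)]
  obtain ⟨n, hn⟩ := Complex.exp_eq_one_iff.mp h3
  have hn2 : ((t1 - t2 : ℝ) : ℂ) * I = ((n:ℂ) * (2*(Real.pi:ℂ))) * I := by rw [hn]; ring
  have hn' := mul_right_cancel₀ Complex.I_ne_zero hn2
  have hre : t1 - t2 = n * (2*Real.pi) := by exact_mod_cast hn'
  have hpi := Real.pi_pos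
  have habs : |(n : ℝ)| < 1 := by
    rcases abs_cases (n : ℝ) with ⟨h4, h5⟩ | ⟨h4, h5⟩ <;> nlinarith [h1.1, h1.2, h2.1, h2.2]
  obtain ⟨hl, hr⟩ := abs_lt.mp habs
  have hl' : (-1:ℤ) < n := by exact_mod_cast hl
  have hr' : n < 1 := by exact_mod_cast hr
  have hn0 : n = 0 := by omega
  rw [hn0] at hre
  simp at hre
  linarith

lemma core_pt {K U : Set ℂ} (hK : IsClosed K) (hU : U = Metric.ball (0:ℂ) 1 \ K)
    {w : ℂ} (hw : ‖w‖ = 1) (hwK : w ∉ K) {V : Set ℂ} (hV : IsOpen V) (hwV : w ∈ V) :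
    ∃ p ∈ U, p ∈ V := by
  obtain ⟨ε, hε, hball⟩ := Metric.isOpen_iff.mp (hV.inter hK.isOpen_compl) w ⟨hwV, hwK⟩
  set ε' := min ε 1 with hε'
  have hε'0 : 0 < ε' := lt_min hε one_pos
  have hε'1 : ε' ≤ 1 := min_le_right _ _
  have hε'ε : ε' ≤ ε := min_le_left _ _
  have hmem : ((1 - ε'/2 : ℝ) : ℂ) * w ∈ V ∩ Kᶜ := by
    apply hball
    rw [Metric.mem_ball, dist_eq_norm]
    have he : ((1 - ε'/2 : ℝ) : ℂ) * w - w = ((-(ε'/2) : ℝ) : ℂ) * w := by push_cast; ring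
    rw [he, norm_mul, hw, mul_one, Complex.norm_real, Real.norm_eq_abs,
      abs_of_nonpos (by linarith)]
    linarith
  refine ⟨((1 - ε'/2 : ℝ) : ℂ) * w, ?_, hmem.1⟩
  rw [hU]
  refine ⟨?_, hmem.2⟩
  rw [Metric.mem_ball, dist_zero_right, norm_mul, hw, mul_one, Complex.norm_real,
    Real.norm_eq_abs, abs_of_pos (by linarith)]
  linarith

lemma exists_t (u : ℂ) (hu : ‖u‖ = 1) (Vf : Set ℂ) (hVf : Vf.Finite)
    (lo hi : ℝ) (hlo : -Real.pi ≤ lo) (hhi : hi ≤ Real.pi) (hlh : lo < hi)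
    (hlo0 : lo ≤ 0) (hhi0 : 0 ≤ hi) (δ : ℝ) (hδ : 0 < δ) :
    ∃ t ∈ Set.Ioo lo hi, u * Complex.exp (t*I) ∉ Vf ∧ ‖u * Complex.exp (t*I) - u‖ < δ := by
  have hu0 : u ≠ 0 := by intro h; rw [h] at hu; simp at hu
  have hpi := Real.pi_pos
  set δ' := min (δ/4) 1 with hδ'def
  have hδ'0 : 0 < δ' := lt_min (by linarith) one_pos
  have hδ'1 : δ' ≤ 1 := min_le_right _ _
  have hδ'δ : δ' ≤ δ/4 := min_le_left _ _
  set lo' := max lo (-δ') with hlo'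
  set hi' := min hi δ' with hhi'
  have hlh' : lo' < hi' := by
    rcases lt_or_ge lo 0 with h | h
    · exact lt_of_lt_of_le (max_lt h (by linarith)) (le_min hhi0 hδ'0.le)
    · have hlo0' : lo = 0 := le_antisymm hlo0 h
      apply lt_of_le_of_lt (show lo' ≤ 0 from max_le hlo0 (by linarith))
      exact lt_min (by linarith) hδ'0
  set B := {t ∈ Set.Ioo lo hi | u * Complex.exp (t*I) ∈ Vf} with hB
  have hBfin : B.Finite := by
    apply Set.Finite.of_finite_image (f := fun t : ℝ => u * Complex.exp (t*I))
      (hVf.subset (by rintro _ ⟨t, ⟨_, ht⟩, rfl⟩; exact ht))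
      ((expt_injOn u hu0 lo hi (by linarith)).mono (fun t ht => ht.1))
  obtain ⟨t, ht⟩ := ((Set.Ioo_infinite hlh').diff hBfin).nonempty
  have htIoo : t ∈ Set.Ioo lo hi := by
    constructor
    · exact lt_of_le_of_lt (le_max_left _ _) ht.1.1
    · exact lt_of_lt_of_le ht.1.2 (min_le_left _ _)
  have htabs : |t| < δ' := by
    rw [abs_lt]
    exact ⟨lt_of_le_of_lt (le_max_right _ _) ht.1.1, lt_of_lt_of_le ht.1.2 (min_le_right _ _)⟩
  refine ⟨t, htIoo, ?_, ?_⟩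
  · intro hmem; exact ht.2 ⟨htIoo, hmem⟩
  · have h1 : u * Complex.exp (t*I) - u = u * (Complex.exp (t*I) - 1) := by ring
    rw [h1, norm_mul, hu, one_mul]
    have h2 : ‖(t:ℂ)*I‖ ≤ 1 := by
      rw [norm_mul, Complex.norm_I, mul_one, Complex.norm_real, Real.norm_eq_abs]
      linarith
    have h3 := Complex.norm_exp_sub_one_le h2
    rw [norm_mul, Complex.norm_I, mul_one, Complex.norm_real, Real.norm_eq_abs] at h3
    calc ‖Complex.exp (↑t*I) - 1‖ ≤ 2 * |t| := h3
    _ < δ := by linarith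

lemma near_pt {K U Vf : Set ℂ} (hK : IsClosed K) (hU : U = Metric.ball (0:ℂ) 1 \ K)
    (hVf : Vf.Finite) (hsphK : ∀ z ∈ K, ‖z‖ = 1 → z ∈ Vf)
    (u : ℂ) (hu : ‖u‖ = 1) (lo hi : ℝ) (hlo : -Real.pi ≤ lo) (hhi : hi ≤ Real.pi)
    (hlh : lo < hi) (hlo0 : lo ≤ 0) (hhi0 : 0 ≤ hi)
    (φ : ℂ → ℝ) (hφ : Continuous φ)
    (hsign : ∀ t ∈ Set.Ioo lo hi, u * Complex.exp (t*I) ∉ Vf → 0 < φ (u * Complex.exp (t*I))) :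
    u ∈ closure {z | z ∈ U ∧ 0 < φ z} := by
  rw [Metric.mem_closure_iff]
  intro δ hδ
  obtain ⟨t, htIoo, htVf, htnear⟩ := exists_t u hu Vf hVf lo hi hlo hhi hlh hlo0 hhi0 δ hδ
  set w := u * Complex.exp (t*I) with hwdef
  have hw1 : ‖w‖ = 1 := by
    rw [norm_mul, hu, one_mul, Complex.norm_exp]
    simp [Complex.mul_re]
  have hwK : w ∉ K := fun h => htVf (hsphK w h hw1)
  have hwV : w ∈ {z | 0 < φ z} ∩ Metric.ball u δ := by
    refine ⟨hsign t htIoo htVf, ?_⟩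
    rw [Metric.mem_ball, dist_eq_norm]
    exact htnear
  obtain ⟨p, hpU, hpV⟩ := core_pt hK hU hw1 hwK
    ((isOpen_lt continuous_const hφ).inter Metric.isOpen_ball) hwV
  exact ⟨p, ⟨hpU, hpV.1⟩, by rw [dist_comm]; exact Metric.mem_ball.mp hpV.2⟩

lemma sign_comp {U : Set ℂ} [Finite (ConnectedComponents ↥U)] (φ : ℂ → ℝ)
    (hφ : Continuous φ) (hnz : ∀ z ∈ U, φ z ≠ 0) {u : ℂ}
    (hu : u ∈ closure {z | z ∈ U ∧ 0 < φ z}) :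
    ∃ c : ConnectedComponents ↥U,
      u ∈ closure (Subtype.val '' (ConnectedComponents.mk ⁻¹' {c})) ∧
      ∀ z ∈ Subtype.val '' (ConnectedComponents.mk ⁻¹' {c}), 0 < φ z := by
  set imc := fun c : ConnectedComponents ↥U =>
    Subtype.val '' (ConnectedComponents.mk ⁻¹' {c}) with himc
  have himcU : ∀ c, imc c ⊆ U := by
    rintro c _ ⟨x, _, rfl⟩; exact x.2
  have hpre : ∀ c, IsPreconnected (imc c) := by
    intro c
    obtain ⟨x, rfl⟩ := ConnectedComponents.surjective_coe c
    rw [himc]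
    simp only [connectedComponents_preimage_singleton]
    exact isPreconnected_connectedComponent.image _ continuous_subtype_val.continuousOn
  have hSC : ∀ c, ∀ z ∈ imc c, ∀ y ∈ imc c, 0 < φ z → 0 < φ y := by
    intro c z hz y hy hφz
    rcases lt_trichotomy (φ y) 0 with h | h | h
    · exfalso
      have himg : IsPreconnected (φ '' imc c) := (hpre c).image _ hφ.continuousOn
      have h0 : (0:ℝ) ∈ Set.Icc (φ y) (φ z) := ⟨h.le, hφz.le⟩
      have hmem := himg.Icc_subset ⟨y, hy, rfl⟩ ⟨z, hz, rfl⟩ h0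
      obtain ⟨z0, hz0, hz00⟩ := hmem
      exact hnz z0 (himcU c hz0) hz00
    · exact absurd h (hnz y (himcU c hy))
    · exact h
  have hdecomp : {z | z ∈ U ∧ 0 < φ z} = ⋃ c ∈ {c | ∃ z ∈ imc c, 0 < φ z}, imc c := by
    ext z
    constructor
    · rintro ⟨hzU, hzφ⟩
      have hz : z ∈ imc (ConnectedComponents.mk (⟨z, hzU⟩ : ↥U)) :=
        ⟨⟨z, hzU⟩, rfl, rfl⟩
      exact Set.mem_biUnion ⟨z, hz, hzφ⟩ hz
    · rintro hz
      obtain ⟨c, hc, hzc⟩ := Set.mem_iUnion₂.mp hz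
      obtain ⟨z0, hz0, hz0φ⟩ := hc
      exact ⟨himcU c hzc, hSC c z0 hz0 z hzc hz0φ⟩
  rw [hdecomp, Set.Finite.closure_biUnion (Set.toFinite _)] at hu
  obtain ⟨c, hc, hcu⟩ := Set.mem_iUnion₂.mp hu
  obtain ⟨z0, hz0, hz0φ⟩ := hc
  exact ⟨c, hcu, fun y hy => hSC c z0 hz0 y hy hz0φ⟩

lemma coe_smul (d : ℕ) (r : ℝ) : (d : ℕ) • ((r : ℝ) : S1) = ((d • r : ℝ) : S1) := by
  induction d with
  | zero => simp
  | succ n ih =>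
    rw [succ_nsmul, succ_nsmul, ih]
    rw [← QuotientAddGroup.mk_add]

lemma int_coe_zero (k : ℤ) : ((k : ℝ) : S1) = 0 := by
  rw [QuotientAddGroup.eq_zero_iff]
  exact ⟨k, by simp⟩

def Ffix (d : ℕ) : Finset S1 :=
  (Finset.range (d-1)).image (fun k : ℕ => ((((k:ℕ) : ℝ)/((d:ℝ)-1) : ℝ) : S1))

lemma Ffix_card {d : ℕ} (hd : 3 ≤ d) : (Ffix d).card = d - 1 := by
  rw [Ffix, Finset.card_image_of_injOn, Finset.card_range]
  intro k hk l hl hkl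
  simp only [Finset.coe_range, Set.mem_Iio, Finset.mem_coe, Finset.mem_range] at hk hl
  have hd1 : (1:ℝ) ≤ (d:ℝ) - 1 := by
    have : (2:ℝ) ≤ d := by exact_mod_cast le_trans (by norm_num) hd
    linarith
  have hmem : ∀ m : ℕ, m < d - 1 → ((m:ℝ)/((d:ℝ)-1)) ∈ Set.Ico (0:ℝ) (0 + 1) := by
    intro m hm
    have hm' : (m : ℝ) < (d:ℝ) - 1 := by
      have : (m : ℝ) < ((d - 1 : ℕ) : ℝ) := by exact_mod_cast hm
      rw [Nat.cast_sub (by omega)] at this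
      simpa using this
    constructor
    · positivity
    · rw [zero_add, div_lt_one (by linarith)]; exact hm'
  have := (AddCircle.coe_eq_coe_iff_of_mem_Ico (hmem k hk) (hmem l hl)).mp hkl
  have h2 : (k:ℝ) = l := by
    have hne : ((d:ℝ)-1) ≠ 0 := by linarith
    field_simp [hne] at this
    exact_mod_cast this
  exact_mod_cast h2

lemma Ffix_fixed {d : ℕ} (hd : 3 ≤ d) : ∀ x ∈ Ffix d, sig d x = x := by
  intro x hx
  rw [Ffix, Finset.mem_image] at hx
  obtain ⟨k, hk, rfl⟩ := hx
  rw [Finset.mem_range] at hk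
  have hd1 : (0:ℝ) < (d:ℝ) - 1 := by
    have : (3:ℝ) ≤ d := by exact_mod_cast hd
    linarith
  rw [sig, coe_smul]
  have key : (d • (((k:ℕ):ℝ)/((d:ℝ)-1)) : ℝ) = ((k:ℕ):ℝ)/((d:ℝ)-1) + ((k : ℤ) : ℝ) := by
    rw [nsmul_eq_mul]
    field_simp
    push_cast
    ring
  rw [key, QuotientAddGroup.mk_add]
  rw [show (((k:ℤ) : ℝ) : S1) = 0 from int_coe_zero k]
  simp

lemma Ffix_complete {d : ℕ} (hd : 3 ≤ d) : ∀ x : S1, sig d x = x → x ∈ Ffix d := by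
  intro x hx
  have : x ∈ ((↑) : ℝ → S1) '' Set.Ico 0 (0 + 1) := by
    rw [AddCircle.coe_image_Ico_eq]; trivial
  obtain ⟨r, hr, rfl⟩ := this
  rw [zero_add] at hr
  rw [sig, coe_smul] at hx
  have hsub : ((d • r - r : ℝ) : S1) = 0 := by
    have h2 : ((d • r : ℝ) : S1) - ((r:ℝ):S1) = 0 := by rw [hx]; simp
    rwa [← QuotientAddGroup.mk_sub] at h2
  rw [QuotientAddGroup.eq_zero_iff] at hsub
  obtain ⟨n, hn⟩ := hsub
  simp only [zsmul_eq_mul, mul_one] at hn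
  rw [nsmul_eq_mul] at hn
  have hd1 : (0:ℝ) < (d:ℝ) - 1 := by
    have : (3:ℝ) ≤ d := by exact_mod_cast hd
    linarith
  have hr' : r = (n : ℝ) / ((d:ℝ)-1) := by
    have : (n : ℝ) = ((d:ℝ) - 1) * r := by
      rw [hn]; push_cast; ring
    rw [this]; field_simp
  have hn0 : 0 ≤ n := by
    by_contra h
    push_neg at h
    have h3 : (n : ℝ) < 0 := by exact_mod_cast h
    nlinarith [hr.1, hr.2, mul_nonneg (by linarith : (0:ℝ) ≤ (d:ℝ) - 1) hr.1]
  have hnlt : n < (d:ℤ) - 1 := by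
    by_contra h
    push_neg at h
    have : ((d:ℝ) - 1) ≤ (n:ℝ) := by
      have : ((d - 1 : ℤ) : ℝ) ≤ (n:ℝ) := by exact_mod_cast h
      push_cast at this
      linarith
    nlinarith [hr.2, mul_lt_mul_of_pos_left hr.2 hd1]
  rw [Ffix, Finset.mem_image]
  refine ⟨n.toNat, ?_, ?_⟩
  · rw [Finset.mem_range]; omega
  · rw [hr']
    congr 2
    exact_mod_cast Int.toNat_of_nonneg hn0

/-- Let `d ≥ 3` and let `P⁺` be a family of pairwise disjoint all-critical
convex polygons (each with at least two vertices, all vertices of a polygon having the same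
σ_d-image) whose complement in the open unit disk has exactly `d` connected components.
If `a ≠ b` are fixed points of σ_d which are vertices of two distinct polygons of `P⁺`
(so these polygons are portals), then at least one complementary component has at least two
fixed points of σ_d in its closure. -/
theorem component_with_two_fixed_points (d : ℕ) (hd : 3 ≤ d)
    (P : Finset (Finset S1)) (hP : ∀ A ∈ P, 2 ≤ A.card)
    (hcrit : ∀ A ∈ P, ∀ x ∈ A, ∀ y ∈ A, sig d x = sig d y)
    (hdisj : ∀ A ∈ P, ∀ B ∈ P, A ≠ B →
      Disjoint (convexHull ℝ (toC '' (A : Set S1))) (convexHull ℝ (toC '' (B : Set S1))))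
    (U : Set ℂ)
    (hU : U = Metric.ball (0 : ℂ) 1 \ ⋃ A ∈ P, convexHull ℝ (toC '' (A : Set S1)))
    (hcomp : Nat.card (ConnectedComponents ↥U) = d)
    (a b : S1) (hab : a ≠ b) (ha : sig d a = a) (hb : sig d b = b)
    (A B : Finset S1) (hA : A ∈ P) (hB : B ∈ P) (hAB : A ≠ B)
    (haA : a ∈ A) (hbB : b ∈ B) :
    ∃ z ∈ U, ∃ p q : S1, p ≠ q ∧ sig d p = p ∧ sig d q = q ∧
      toC p ∈ closure (connectedComponentIn U z) ∧
      toC q ∈ closure (connectedComponentIn U z) := by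
  classical
  set K : Set ℂ := ⋃ A ∈ P, convexHull ℝ (toC '' (A : Set S1)) with hK
  have hKclosed : IsClosed K := by
    apply Set.Finite.isClosed_biUnion P.finite_toSet
    intro A' _
    exact ((A'.finite_toSet.image toC).isCompact_convexHull ℝ).isClosed
  set VImg : Set ℂ := ⋃ A ∈ P, toC '' (A : Set S1) with hVImg
  have hVImgfin : VImg.Finite :=
    Set.Finite.biUnion P.finite_toSet (fun A' _ => A'.finite_toSet.image toC)
  have hsph : ∀ z ∈ K, ‖z‖ = 1 → z ∈ VImg := by
    intro z hz hz1
    rw [hK] at hz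
    obtain ⟨A', hA', hzA'⟩ := Set.mem_iUnion₂.mp hz
    apply Set.mem_biUnion hA'
    apply sphere_hull_mem ?_ hzA' hz1
    rintro _ ⟨x, _, rfl⟩
    rw [Metric.mem_sphere, dist_zero_right]
    exact norm_toC x
  have hfin : Finite (ConnectedComponents ↥U) := by
    by_contra h
    rw [not_finite_iff_infinite] at h
    rw [@Nat.card_eq_zero_of_infinite _ h] at hcomp
    omega
  -- every circle point is in the closure of some component
  have ONE : ∀ y : S1, ∃ c : ConnectedComponents ↥U,
      toC y ∈ closure (Subtype.val '' (ConnectedComponents.mk ⁻¹' {c})) := by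
    intro y
    have hcl : toC y ∈ closure {z | z ∈ U ∧ 0 < (fun _ : ℂ => (1:ℝ)) z} := by
      apply near_pt hKclosed hU hVImgfin hsph (toC y) (norm_toC y) 0 Real.pi
        (by linarith [Real.pi_pos]) le_rfl Real.pi_pos le_rfl Real.pi_pos.le
        (fun _ => (1:ℝ)) continuous_const
      intro t _ _
      exact one_pos
    obtain ⟨c, hc, _⟩ := sign_comp _ continuous_const (fun z _ => one_ne_zero) hcl
    exact ⟨c, hc⟩
  -- a portal vertex is in the closure of two distinct components
  have TWO : ∀ (x : S1) (A' : Finset S1), A' ∈ P → x ∈ A' →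
      ∃ c1 c2 : ConnectedComponents ↥U, c1 ≠ c2 ∧
        toC x ∈ closure (Subtype.val '' (ConnectedComponents.mk ⁻¹' {c1})) ∧
        toC x ∈ closure (Subtype.val '' (ConnectedComponents.mk ⁻¹' {c2})) := by
    intro x A' hA' hxA'
    have hpi := Real.pi_pos
    have hx1 : x ∈ ((↑) : ℝ → S1) '' Set.Ico 0 (0+1) := by
      rw [AddCircle.coe_image_Ico_eq]; trivial
    obtain ⟨α, _, hαx⟩ := hx1
    obtain ⟨x', hx'A, hx'x⟩ := Finset.exists_mem_ne
      (lt_of_lt_of_le one_lt_two (hP A' hA')) x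
    have hx2 : x' ∈ ((↑) : ℝ → S1) '' Set.Ico α (α+1) := by
      rw [AddCircle.coe_image_Ico_eq]; trivial
    obtain ⟨β, hβ, hβx⟩ := hx2
    have hs'0 : 0 ≤ β - α := by linarith [hβ.1]
    have hs'1 : β - α < 1 := by linarith [hβ.2]
    have hs'ne : β - α ≠ 0 := by
      intro h
      apply hx'x
      rw [← hβx, ← hαx]
      congr 1
      linarith
    set s : ℝ := 2*Real.pi*(β - α) with hsdef
    have hs0 : 0 < s := by
      have : 0 < β - α := lt_of_le_of_ne hs'0 (Ne.symm hs'ne)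
      positivity
    have hs2 : s < 2*Real.pi := by
      rw [hsdef]
      nlinarith
    set u := toC x with hudef
    have hu1 : ‖u‖ = 1 := norm_toC x
    have hu0 : u ≠ 0 := by intro h; rw [h] at hu1; simp at hu1
    have hueq : u = Complex.exp (2*Real.pi*Complex.I*α) := by rw [hudef, ← hαx, toC_coe]
    set u' := toC x' with hu'def
    have hu'1 : ‖u'‖ = 1 := norm_toC x'
    have hu'eq : u' = u * Complex.exp ((s:ℝ)*Complex.I) := by
      rw [hu'def, ← hβx, toC_coe, hueq, ← Complex.exp_add]
      congr 1
      rw [hsdef]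
      push_cast
      ring
    have huu' : u ≠ u' := by
      intro h
      have h1 : (1 : ℂ) = Complex.exp ((s:ℝ)*I) :=
        mul_left_cancel₀ hu0 (by rw [mul_one, ← hu'eq]; exact h)
      obtain ⟨n, hn⟩ := Complex.exp_eq_one_iff.mp h1.symm
      have hn2 : ((s:ℝ):ℂ)*I = ((n:ℂ)*(2*(Real.pi:ℂ)))*I := by rw [hn]; ring
      have hn3 := mul_right_cancel₀ Complex.I_ne_zero hn2
      have hs3 : s = n*(2*Real.pi) := by exact_mod_cast hn3
      have hnn : (0:ℝ) < (n:ℝ) := by nlinarith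
      have hn1 : (1:ℝ) ≤ (n:ℝ) := by
        have : (0:ℤ) < n := by exact_mod_cast hnn
        exact_mod_cast this
      nlinarith
    set f : ℂ → ℝ := fun z => ((starRingEnd ℂ) (u' - u) * (z - u)).im with hfdef
    have hfc : Continuous f :=
      Complex.continuous_im.comp (continuous_const.mul (continuous_id.sub continuous_const))
    have hfnz : ∀ z ∈ U, f z ≠ 0 := by
      intro z hz h0
      rw [hU] at hz
      have hzb : ‖z‖ < 1 := by
        have := Metric.mem_ball.mp hz.1
        rwa [dist_zero_right] at this
      have hseg := line_mem_segment hu1 hu'1 huu' hzb h0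
      apply hz.2
      apply Set.mem_biUnion hA'
      have hum : u ∈ toC '' (A' : Set S1) := ⟨x, hxA', rfl⟩
      have hu'm : u' ∈ toC '' (A' : Set S1) := ⟨x', hx'A, rfl⟩
      exact segment_subset_convexHull hum hu'm hseg
    have hfval : ∀ t : ℝ, f (u * Complex.exp ((t:ℝ)*I))
        = Real.sin (t - s) + Real.sin s - Real.sin t := by
      intro t
      rw [hfdef]
      simp only
      rw [hu'eq]
      exact fval u hu1 s t
    have hcl1 : u ∈ closure {z | z ∈ U ∧ 0 < f z} := by
      apply near_pt hKclosed hU hVImgfin hsph u hu1 (s/2 - Real.pi) 0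
        (by linarith) (by linarith) (by linarith) (by linarith) le_rfl f hfc
      intro t ht _
      rw [hfval t]
      exact h_pos hs0 ht.1 ht.2
    obtain ⟨c1, hc1u, hc1pos⟩ := sign_comp f hfc hfnz hcl1
    have hcl2 : u ∈ closure {z | z ∈ U ∧ 0 < (fun z => -(f z)) z} := by
      apply near_pt hKclosed hU hVImgfin hsph u hu1 0 (min s Real.pi)
        (by linarith) (min_le_right _ _) (lt_min hs0 hpi) le_rfl (le_of_lt (lt_min hs0 hpi))
        (fun z => -(f z)) hfc.neg
      intro t ht _
      show 0 < -(f (u * Complex.exp ((t:ℝ)*I)))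
      rw [hfval t]
      have := h_neg hs0 hs2 ht.1 (lt_of_lt_of_le ht.2 (min_le_left _ _))
      linarith
    obtain ⟨c2, hc2u, hc2pos⟩ := sign_comp (fun z => -(f z)) hfc.neg
      (fun z hz => neg_ne_zero.mpr (hfnz z hz)) hcl2
    refine ⟨c1, c2, ?_, hc1u, hc2u⟩
    intro h
    obtain ⟨z0, hz0⟩ := ConnectedComponents.surjective_coe c1
    have hz0mem : (z0 : ℂ) ∈ Subtype.val '' (ConnectedComponents.mk ⁻¹' {c1}) :=
      ⟨z0, by simp [hz0], rfl⟩
    have h1 := hc1pos _ hz0mem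
    have h2 : 0 < -(f (z0 : ℂ)) := hc2pos _ (by rw [← h]; exact hz0mem)
    linarith
  -- counting argument
  by_contra hgoal
  letI : Fintype (ConnectedComponents ↥U) := Fintype.ofFinite _
  set m : S1 → Finset (ConnectedComponents ↥U) := fun x =>
    Finset.univ.filter
      (fun c => toC x ∈ closure (Subtype.val '' (ConnectedComponents.mk ⁻¹' {c}))) with hm
  have hdisjm : ∀ x ∈ Ffix d, ∀ y ∈ Ffix d, x ≠ y → Disjoint (m x) (m y) := by
    intro x hx y hy hxy
    rw [Finset.disjoint_left]
    intro c hcx hcy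
    exfalso
    apply hgoal
    obtain ⟨z0, hz0⟩ := ConnectedComponents.surjective_coe c
    have hpre : ConnectedComponents.mk ⁻¹' {c} = connectedComponent z0 := by
      rw [← hz0, connectedComponents_preimage_singleton]
    have hccIn : connectedComponentIn U (z0 : ℂ)
        = Subtype.val '' (ConnectedComponents.mk ⁻¹' {c}) := by
      rw [connectedComponentIn_eq_image z0.2]
      simp only [Subtype.coe_eta]
      rw [← hpre]
    refine ⟨(z0 : ℂ), z0.2, x, y, hxy, Ffix_fixed hd x hx, Ffix_fixed hd y hy, ?_, ?_⟩
    · rw [hccIn]; exact (Finset.mem_filter.mp hcx).2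
    · rw [hccIn]; exact (Finset.mem_filter.mp hcy).2
  have hone : ∀ x ∈ Ffix d, 1 ≤ (m x).card := by
    intro x _
    obtain ⟨c, hc⟩ := ONE x
    exact Finset.card_pos.mpr ⟨c, Finset.mem_filter.mpr ⟨Finset.mem_univ _, hc⟩⟩
  have htwo : ∀ (x : S1) (A' : Finset S1), A' ∈ P → x ∈ A' → 2 ≤ (m x).card := by
    intro x A' hA' hx
    obtain ⟨c1, c2, hne, h1, h2⟩ := TWO x A' hA' hx
    exact Finset.one_lt_card.mpr ⟨c1, Finset.mem_filter.mpr ⟨Finset.mem_univ _, h1⟩,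
      c2, Finset.mem_filter.mpr ⟨Finset.mem_univ _, h2⟩, hne⟩
  have hsubab : ({a, b} : Finset S1) ⊆ Ffix d := by
    intro x hx
    rcases Finset.mem_insert.mp hx with rfl | hx
    · exact Ffix_complete hd _ ha
    · rw [Finset.mem_singleton] at hx; subst hx; exact Ffix_complete hd _ hb
  have hsum1 : (Ffix d \ {a, b}).card ≤ ∑ x ∈ Ffix d \ {a, b}, (m x).card := by
    rw [Finset.card_eq_sum_ones]
    apply Finset.sum_le_sum
    intro x hx
    exact hone x (Finset.mem_sdiff.mp hx).1
  have hsum2 : ∑ x ∈ ({a, b} : Finset S1), (m x).card = (m a).card + (m b).card :=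
    Finset.sum_pair hab
  have hsumtot : ∑ x ∈ Ffix d, (m x).card
      = ∑ x ∈ Ffix d \ {a, b}, (m x).card + ∑ x ∈ ({a, b} : Finset S1), (m x).card :=
    (Finset.sum_sdiff hsubab).symm
  have hcard1 : (Ffix d \ {a, b}).card = (d - 1) - 2 := by
    rw [Finset.card_sdiff_of_subset hsubab, Ffix_card hd, Finset.card_pair hab]
  have hbU : (Finset.biUnion (Ffix d) m).card = ∑ x ∈ Ffix d, (m x).card :=
    Finset.card_biUnion hdisjm
  have hle : (Finset.biUnion (Ffix d) m).card ≤ d := by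
    calc (Finset.biUnion (Ffix d) m).card
        ≤ Fintype.card (ConnectedComponents ↥U) := Finset.card_le_univ _
    _ = d := by rw [← Nat.card_eq_fintype_card, hcomp]
  have h2a := htwo a A hA haA
  have h2b := htwo b B hB hbB
  have e1 : (d - 1) - 2 + ((m a).card + (m b).card) ≤ ∑ x ∈ Ffix d, (m x).card := by
    rw [hsumtot, hsum2, ← hcard1]
    exact Nat.add_le_add hsum1 le_rfl
  have e2 : ∑ x ∈ Ffix d, (m x).card ≤ d := by rw [← hbU]; exact hle
  have e3 : (d - 1) - 2 + (2 + 2) ≤ d :=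
    le_trans (Nat.add_le_add le_rfl (Nat.add_le_add h2a h2b)) (le_trans e1 e2)
  omega
end
end
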